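/- For a > b > 0, the two-sided bound b·(a/b - 1)^x < Φ(x) does not hold in general, but the upper bound holds: Φ(x) = (a^(1/x) - b^(1/x))^x < a - b for all x > 1. -/

import Mathlib

open Real

theorem Phi_upper_bound (a b : ℝ) (hb : 0 < b) (hab : b < a) :
    ∀ x : ℝ, 1 < x → (a ^ (1 / x) - b ^ (1 / x)) ^ x < a - b := by
  intro x hx
  have hx0 : 0 < x := lt_trans one_pos hx
  set p : ℝ := 1 / x with hp
  have hp0 : 0 < p := by positivity
  have hp1 : p < 1 := by
    rw [hp, div_lt_one hx0]; exact hx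
  set d : ℝ := a - b with hd
  have hd0 : 0 < d := sub_pos.mpr hab
  -- strict subadditivity: a^p - b^p < d^p
  have key : a ^ p - b ^ p < d ^ p := by
    have hmono : StrictMonoOn (fun t : ℝ => t ^ p - (t + d) ^ p) (Set.Ici 0) := by
      apply strictMonoOn_of_deriv_pos (convex_Ici 0)
      · apply ContinuousOn.sub
        · exact (continuousOn_id.rpow_const (fun t _ => Or.inr hp0.le))
        · exact ((continuousOn_id.add continuousOn_const).rpow_const
            (fun t _ => Or.inr hp0.le))
      · intro t ht
        rw [interior_Ici] at ht
        have ht0 : (0:ℝ) < t := ht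
        have h1 : HasDerivAt (fun t : ℝ => t ^ p) (p * t ^ (p - 1)) t :=
          Real.hasDerivAt_rpow_const (Or.inl ht0.ne')
        have h2 : HasDerivAt (fun t : ℝ => (t + d) ^ p)
            (p * (t + d) ^ (p - 1) * 1) t := by
          have := (Real.hasDerivAt_rpow_const (p := p)
            (x := t + d) (Or.inl (by positivity))).comp t
            ((hasDerivAt_id t).add_const d)
          simpa [Function.comp_def] using this
        have := (h1.sub h2).deriv
        rw [show (fun t : ℝ => t ^ p - (t + d) ^ p) = ((fun t : ℝ => t ^ p) - fun t : ℝ => (t + d) ^ p) from rfl, this]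
        have hlt : (t + d) ^ (p - 1) < t ^ (p - 1) :=
          Real.rpow_lt_rpow_of_neg ht0 (by linarith) (by linarith)
        nlinarith
    have := hmono (Set.self_mem_Ici) (Set.mem_Ici.mpr hb.le) hb
    simp only [Real.zero_rpow hp0.ne', zero_add] at this
    have hbd : b + d = a := by ring
    rw [hbd] at this
    linarith
  have hsub : 0 ≤ a ^ p - b ^ p := by
    have : b ^ p < a ^ p := Real.rpow_lt_rpow hb.le hab hp0
    linarith
  calc (a ^ p - b ^ p) ^ x < (d ^ p) ^ x := Real.rpow_lt_rpow hsub key hx0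
    _ = d := by
        rw [← Real.rpow_mul hd0.le, hp, one_div_mul_cancel hx0.ne', Real.rpow_one]
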